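/- arXiv:1302.2386 — 2 statements merged into one kernel-verified Lean document; each statement's English description precedes it below -/
import Mathlib

section
/- A subspace V of ℝ^n is (A,B)-invariant (i.e., A·V ⊆ V + Im(B)) if and only if there exists a linear feedback map K : ℝ^n → ℝ^r such that (A + B·K)·V ⊆ V. -/
/-- A subspace `V` of `ℝ^n` is `(A,B)`-invariant (`A·V ⊆ V + Im B`)
iff there is a feedback `K` with `(A + B·K)·V ⊆ V`. -/
theorem stmt0 {n r : ℕ} (A : Matrix (Fin n) (Fin n) ℝ) (B : Matrix (Fin n) (Fin r) ℝ)
    (V : Submodule ℝ (Fin n → ℝ)) :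
    V.map A.mulVecLin ≤ V ⊔ LinearMap.range B.mulVecLin ↔
      ∃ K : Matrix (Fin r) (Fin n) ℝ, V.map (A + B * K).mulVecLin ≤ V := by
  constructor
  · intro h
    obtain ⟨W, hW⟩ := Submodule.exists_isCompl V
    set q := V.mkQ with hq
    set R := LinearMap.range (q ∘ₗ B.mulVecLin) with hR
    have hmem : ∀ v : V, q (A.mulVecLin v) ∈ R := by
      intro v
      have hv : A.mulVecLin v ∈ V ⊔ LinearMap.range B.mulVecLin :=
        h ⟨v, v.2, rfl⟩
      rw [Submodule.mem_sup] at hv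
      obtain ⟨y, hy, z, ⟨u, hu⟩, hyz⟩ := hv
      refine ⟨u, ?_⟩
      have hqy : q y = 0 := (Submodule.Quotient.mk_eq_zero V).2 hy
      simp only [LinearMap.comp_apply]
      rw [hu, ← hyz, map_add, hqy, zero_add]
    let φ : V →ₗ[ℝ] R :=
      LinearMap.codRestrict R ((q ∘ₗ A.mulVecLin) ∘ₗ V.subtype) hmem
    obtain ⟨σ, hσ⟩ := (q ∘ₗ B.mulVecLin).rangeRestrict.exists_rightInverse_of_surjective
      (LinearMap.range_rangeRestrict _)
    let g : V →ₗ[ℝ] (Fin r → ℝ) := σ ∘ₗ φ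
    let ℓ : (Fin n → ℝ) →ₗ[ℝ] (Fin r → ℝ) := -(g ∘ₗ V.linearProjOfIsCompl W hW)
    refine ⟨LinearMap.toMatrix' ℓ, ?_⟩
    rintro x ⟨v, hv, rfl⟩
    have hmv : (A + B * LinearMap.toMatrix' ℓ).mulVecLin v
        = A.mulVecLin v + B.mulVecLin (ℓ v) := by
      have hK' : (LinearMap.toMatrix' ℓ).mulVec v = ℓ v := by
        rw [← Matrix.toLin'_apply, Matrix.toLin'_toMatrix']
      simp [Matrix.mulVecLin_apply, Matrix.add_mulVec, ← Matrix.mulVec_mulVec, hK']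
    have hproj : V.linearProjOfIsCompl W hW v = ⟨v, hv⟩ :=
      Submodule.linearProjOfIsCompl_apply_left hW ⟨v, hv⟩
    have hℓv : ℓ v = -(g ⟨v, hv⟩) := by
      simp [ℓ, hproj]
    have hqBg : q (B.mulVecLin (g ⟨v, hv⟩)) = q (A.mulVecLin v) := by
      have := congrArg (fun f => ((f (φ ⟨v, hv⟩)) : (Fin n → ℝ) ⧸ V)) hσ
      exact this
    have hq0 : q ((A + B * LinearMap.toMatrix' ℓ).mulVecLin v) = 0 := by
      rw [hmv, hℓv, map_neg, map_add, map_neg, hqBg]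
      exact add_neg_cancel _
    exact (Submodule.Quotient.mk_eq_zero V).1 hq0
  · rintro ⟨K, hK⟩
    rintro x ⟨v, hv, rfl⟩
    have h1 : (A + B * K).mulVecLin v ∈ V := hK ⟨v, hv, rfl⟩
    have h2 : A.mulVecLin v
        = (A + B * K).mulVecLin v + B.mulVecLin (-(K.mulVecLin v)) := by
      simp only [Matrix.mulVecLin_apply, Matrix.add_mulVec, ← Matrix.mulVec_mulVec,
        Matrix.mulVec_neg]
      abel
    rw [h2]
    exact Submodule.add_mem_sup h1 ⟨-(K.mulVecLin v), rfl⟩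
end

section
/- For any subspace F ⊆ ℝ^n, there exists a unique supremal (A,B)-invariant subspace V* contained in F; that is, V* is (A,B)-invariant, V* ⊆ F, and every (A,B)-invariant subspace W ⊆ F satisfies W ⊆ V*. -/
/-- every subspace `F ⊆ ℝ^n` contains a unique supremal `(A,B)`-invariant
subspace `V*`: `V*` is `(A,B)`-invariant, contained in `F`, and contains every
`(A,B)`-invariant subspace contained in `F`. -/
theorem stmt3 {n r : ℕ} (A : Matrix (Fin n) (Fin n) ℝ) (B : Matrix (Fin n) (Fin r) ℝ)
    (F : Submodule ℝ (Fin n → ℝ)) :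
    ∃! Vstar : Submodule ℝ (Fin n → ℝ),
      Vstar.map A.mulVecLin ≤ Vstar ⊔ LinearMap.range B.mulVecLin ∧ Vstar ≤ F ∧
        ∀ W : Submodule ℝ (Fin n → ℝ),
          W.map A.mulVecLin ≤ W ⊔ LinearMap.range B.mulVecLin → W ≤ F → W ≤ Vstar := by
  set R := LinearMap.range B.mulVecLin
  set S : Set (Submodule ℝ (Fin n → ℝ)) :=
    {W | W.map A.mulVecLin ≤ W ⊔ R ∧ W ≤ F}
  set V : Submodule ℝ (Fin n → ℝ) := ⨆ W : S, (W : Submodule ℝ (Fin n → ℝ)) with hV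
  have hVF : V ≤ F := iSup_le fun W => W.2.2
  have hVinv : V.map A.mulVecLin ≤ V ⊔ R := by
    rw [hV, Submodule.map_iSup]
    refine iSup_le fun W => le_trans W.2.1 ?_
    exact sup_le_sup_right (le_iSup (fun W : S => (W : Submodule ℝ (Fin n → ℝ))) W) R
  have hVmax : ∀ W : Submodule ℝ (Fin n → ℝ),
      W.map A.mulVecLin ≤ W ⊔ R → W ≤ F → W ≤ V := fun W h1 h2 =>
    le_iSup (fun W : S => (W : Submodule ℝ (Fin n → ℝ))) ⟨W, h1, h2⟩
  refine ⟨V, ⟨hVinv, hVF, hVmax⟩, ?_⟩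
  rintro V' ⟨h1, h2, h3⟩
  exact le_antisymm (hVmax V' h1 h2) (h3 V hVinv hVF)
end
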